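/- arXiv:1012.4657 — 4 statements merged into one kernel-verified Lean document; each statement's English description precedes it below -/
import Mathlib

section
/- Let S be a closed symmetric operator in a Hilbert space H, let 𝒪 ⊂ ℂ⁺ be open and 𝒪* = {λ̄ : λ ∈ 𝒪}, and set M = ⋂_{λ ∈ 𝒪 ∪ 𝒪*} ran(S - λ). Then M is invariant under S in the sense that if u ∈ M ∩ dom S then S u ∈ M. -/
open scoped ComplexConjugate
local notation "⟪" x ", " y "⟫" => @inner ℂ _ _ x y

/-- Let `S` be a closed symmetric operator in a Hilbert space `H`, let
`𝒪 ⊆ ℂ⁺` be open, `𝒪* = {conj λ : λ ∈ 𝒪}`, and `M = ⋂_{λ ∈ 𝒪 ∪ 𝒪*} ran (S - λ)`.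
Then `M` is invariant under `S`: if `u ∈ M ∩ dom S` then `S u ∈ M`. -/
theorem inter_ranges_invariant
    {H : Type*} [NormedAddCommGroup H] [InnerProductSpace ℂ H] [CompleteSpace H]
    (S : H →ₗ.[ℂ] H)
    (hsym : ∀ x y : S.domain, ⟪S x, (y : H)⟫ = ⟪(x : H), S y⟫)
    (hclosed : S.IsClosed)
    (O : Set ℂ) (hO : IsOpen O) (hOup : ∀ lam ∈ O, 0 < lam.im)
    (M : Set H)
    (hM : M = ⋂ lam ∈ O ∪ (fun z => conj z) '' O,
      {y : H | ∃ x : S.domain, S x - lam • (x : H) = y})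
    (u : S.domain) (hu : (u : H) ∈ M) :
    S u ∈ M := by
  subst hM
  simp only [Set.mem_iInter, Set.mem_setOf_eq] at hu ⊢
  intro lam hlam
  obtain ⟨x, hx⟩ := hu lam hlam
  refine ⟨u + lam • x, ?_⟩
  rw [S.map_add, S.map_smul]
  push_cast
  rw [← hx]
  module
end

section
/- Let S be a closed symmetric operator in a Hilbert space H, let 𝒪 ⊂ ℂ⁺ be open and nonempty, 𝒪* its complex conjugate set, and M = ⋂_{λ ∈ 𝒪 ∪ 𝒪*} ran(S - λ). Then the restriction S_M = S ↾ (M ∩ dom S) is a selfadjoint operator in the Hilbert space M; in particular, for every ν ∈ 𝒪 one has ran(S_M - ν) = M = ran(S_M - ν̄). -/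
open scoped ComplexConjugate
local notation "⟪" x ", " y "⟫" => @inner ℂ _ _ x y

lemma aux_lower {H : Type*} [NormedAddCommGroup H] [InnerProductSpace ℂ H]
    (S : H →ₗ.[ℂ] H)
    (hsym : ∀ x y : S.domain, ⟪S x, (y : H)⟫ = ⟪(x : H), S y⟫)
    (lam : ℂ) (u : S.domain) :
    |lam.im| * ‖(u : H)‖ ≤ ‖S u - lam • (u : H)‖ := by
  set v : H := S u - (lam.re : ℂ) • (u : H) with hv
  have hsplit : S u - lam • (u : H) = v - ((lam.im : ℂ) * Complex.I) • (u : H) := by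
    have h1 : lam • (u : H) = (lam.re : ℂ) • (u : H) + ((lam.im : ℂ) * Complex.I) • (u : H) := by
      rw [← add_smul, Complex.re_add_im]
    rw [h1, hv, sub_add_eq_sub_sub]
  have hreal : (starRingEnd ℂ) ⟪v, (u : H)⟫ = ⟪v, (u : H)⟫ := by
    rw [inner_conj_symm]
    rw [hv, inner_sub_left, inner_sub_right, inner_smul_left, inner_smul_right,
      Complex.conj_ofReal, hsym u u, ← inner_conj_symm (u : H) ((u : H)),
      inner_self_conj]
  have him0 : (⟪v, (u : H)⟫ : ℂ).im = 0 := by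
    have := congrArg Complex.im hreal
    simp only [Complex.conj_im] at this
    linarith
  have hre0 : (⟪v, ((lam.im : ℂ) * Complex.I) • (u : H)⟫ : ℂ).re = 0 := by
    rw [inner_smul_right]
    simp [Complex.mul_re, Complex.mul_im, him0]
  have hsq : ‖S u - lam • (u : H)‖ ^ 2 = ‖v‖ ^ 2 + (|lam.im| * ‖(u : H)‖) ^ 2 := by
    rw [hsplit, @norm_sub_sq ℂ]
    have hn : ‖((lam.im : ℂ) * Complex.I) • (u : H)‖ = |lam.im| * ‖(u : H)‖ := by
      rw [norm_smul]
      simp [Complex.norm_real]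
    rw [hn]
    simp only [RCLike.re_to_complex, hre0]
    ring
  have h2 : (|lam.im| * ‖(u : H)‖) ^ 2 ≤ ‖S u - lam • (u : H)‖ ^ 2 := by
    rw [hsq]; nlinarith [sq_nonneg ‖v‖]
  have hnn : (0:ℝ) ≤ |lam.im| * ‖(u : H)‖ := by positivity
  exact (pow_le_pow_iff_left₀ hnn (norm_nonneg _) two_ne_zero).mp h2

lemma aux_range_closed {H : Type*} [NormedAddCommGroup H] [InnerProductSpace ℂ H]
    [CompleteSpace H] (S : H →ₗ.[ℂ] H)
    (hsym : ∀ x y : S.domain, ⟪S x, (y : H)⟫ = ⟪(x : H), S y⟫)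
    (hclosed : S.IsClosed) (lam : ℂ) (him : lam.im ≠ 0) :
    IsClosed {y : H | ∃ x : S.domain, S x - lam • (x : H) = y} := by
  have ha0 : (0:ℝ) < |lam.im| := abs_pos.mpr him
  apply IsSeqClosed.isClosed
  intro y p hy hp
  choose x hx using hy
  have key : ∀ m n, |lam.im| * ‖((x m : H)) - (x n : H)‖ ≤ ‖y m - y n‖ := by
    intro m n
    have h := aux_lower S hsym lam (x m - x n)
    have heq : S (x m - x n) - lam • ((x m - x n : S.domain) : H) = y m - y n := by
      rw [LinearPMap.map_sub, Submodule.coe_sub, smul_sub, ← hx m, ← hx n]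
      abel
    rw [heq] at h
    simpa using h
  have hcau : CauchySeq (fun n => ((x n : H))) := by
    rw [Metric.cauchySeq_iff]
    intro ε hε
    obtain ⟨N, hN⟩ := Metric.cauchySeq_iff.mp hp.cauchySeq (ε * |lam.im|) (by positivity)
    refine ⟨N, fun m hm n hn => ?_⟩
    have h1 := key m n
    have h2 := hN m hm n hn
    rw [dist_eq_norm] at h2 ⊢
    nlinarith
  obtain ⟨q, hq⟩ := cauchySeq_tendsto_of_complete hcau
  have hSx : ∀ n, S (x n) = y n + lam • ((x n : H)) := by
    intro n; rw [← hx n]; abel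
  have hS : Filter.Tendsto (fun n => S (x n)) Filter.atTop (nhds (p + lam • q)) := by
    simp only [hSx]
    exact hp.add (hq.const_smul lam)
  have htend : Filter.Tendsto (fun n => (((x n : H)), S (x n))) Filter.atTop
      (nhds (q, p + lam • q)) := hq.prodMk_nhds hS
  have hmem : (q, p + lam • q) ∈ S.graph := by
    refine hclosed.mem_of_tendsto htend (Filter.Eventually.of_forall fun n => ?_)
    exact S.mem_graph (x n)
  rw [LinearPMap.mem_graph_iff] at hmem
  obtain ⟨u, hu1, hu2⟩ := hmem
  exact ⟨u, by rw [hu2, hu1]; simp⟩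

lemma aux_orth {H : Type*} [NormedAddCommGroup H] [InnerProductSpace ℂ H]
    [CompleteSpace H] (S : H →ₗ.[ℂ] H)
    (hsym : ∀ x y : S.domain, ⟪S x, (y : H)⟫ = ⟪(x : H), S y⟫)
    (hclosed : S.IsClosed) (lam mu : ℂ) (hlam : lam.im ≠ 0) (hne : lam ≠ mu)
    (y : H) (hy : ∃ x0 : S.domain, S x0 - lam • (x0 : H) = y)
    (x : S.domain) (hx : S x - mu • (x : H) = y) :
    ∃ x1 : S.domain, S x1 - lam • (x1 : H) = (x : H) := by
  set K : Submodule ℂ H := LinearMap.range (S.toFun - lam • S.domain.subtype) with hK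
  have hmemK : ∀ z : H, z ∈ K ↔ ∃ x1 : S.domain, S x1 - lam • (x1 : H) = z := by
    intro z
    simp only [hK, LinearMap.mem_range, LinearMap.sub_apply, LinearMap.smul_apply,
      Submodule.coe_subtype]
    rfl
  have hKset : (K : Set H) = {z : H | ∃ x1 : S.domain, S x1 - lam • (x1 : H) = z} :=
    Set.ext hmemK
  have hKc : IsClosed (K : Set H) := by
    rw [hKset]; exact aux_range_closed S hsym hclosed lam hlam
  haveI : CompleteSpace K := hKc.completeSpace_coe
  suffices h : (x : H) ∈ K by exact (hmemK _).mp h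
  rw [← K.orthogonal_orthogonal]
  rw [Submodule.mem_orthogonal]
  intro e he
  have h0 : ∀ u : S.domain, ⟪S u - lam • (u : H), e⟫ = 0 := fun u =>
    (Submodule.mem_orthogonal K e).mp he _ ((hmemK _).mpr ⟨u, rfl⟩)
  have hy0 : ⟪y, e⟫ = 0 := by
    obtain ⟨x0, hx0⟩ := hy
    rw [← hx0]; exact h0 x0
  have h1 := h0 x
  rw [inner_sub_left, inner_smul_left, sub_eq_zero] at h1
  have hSx : S x = y + mu • (x : H) := by rw [← hx]; abel
  rw [hSx, inner_add_left, inner_smul_left, hy0, zero_add] at h1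
  have hxe : ⟪(x : H), e⟫ = 0 := by
    by_contra h
    exact hne (star_injective (mul_right_cancel₀ h h1.symm))
  rw [← inner_conj_symm, hxe, map_zero]

lemma aux_surj {H : Type*} [NormedAddCommGroup H] [InnerProductSpace ℂ H]
    [CompleteSpace H] (S : H →ₗ.[ℂ] H)
    (hsym : ∀ x y : S.domain, ⟪S x, (y : H)⟫ = ⟪(x : H), S y⟫)
    (hclosed : S.IsClosed)
    (Om : Set ℂ) (hOmim : ∀ l ∈ Om, l.im ≠ 0)
    (M : Set H)
    (hMmem : ∀ z, z ∈ M ↔ ∀ l ∈ Om, ∃ x : S.domain, S x - l • (x : H) = z)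
    (nu : ℂ) (hnu : nu ∈ Om)
    (hacc : ∀ δ > (0:ℝ), ∃ μ ∈ Om, μ ≠ nu ∧ dist μ nu < δ)
    (y : H) (hy : y ∈ M) :
    ∃ x : S.domain, (x : H) ∈ M ∧ S x - nu • (x : H) = y := by
  obtain ⟨x, hx⟩ := (hMmem y).mp hy nu hnu
  refine ⟨x, ?_, hx⟩
  rw [hMmem]
  intro lam hlam
  by_cases hne : lam = nu
  · -- the hard case: lam = nu, via approximation
    subst hne
    have hlamim := hOmim lam hlam
    have hKc := aux_range_closed S hsym hclosed lam hlamim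
    suffices h : (x : H) ∈ closure {z : H | ∃ x1 : S.domain, S x1 - lam • (x1 : H) = z} by
      rwa [hKc.closure_eq] at h
    rw [Metric.mem_closure_iff]
    intro ε hε
    set a := |lam.im| with ha
    have ha0 : (0:ℝ) < a := abs_pos.mpr hlamim
    set δ := min (a / 2) (ε * a ^ 2 / (2 * ‖y‖ + 2)) with hδdef
    have hδ0 : (0:ℝ) < δ := lt_min (by positivity) (by positivity)
    obtain ⟨μ, hμOm, hμne, hμd⟩ := hacc δ hδ0
    obtain ⟨z, hz⟩ := (hMmem y).mp hy μ hμOm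
    have hzK : ∃ x1 : S.domain, S x1 - lam • (x1 : H) = (z : H) :=
      aux_orth S hsym hclosed lam μ hlamim (Ne.symm hμne) y ((hMmem y).mp hy lam hlam) z hz
    refine ⟨(z : H), hzK, ?_⟩
    -- estimate dist ↑x ↑z
    have hdnn : (0:ℝ) ≤ dist μ lam := dist_nonneg
    have him : a / 2 ≤ |μ.im| := by
      have h1 : |μ.im - lam.im| ≤ dist μ lam := by
        rw [Complex.dist_eq]
        simpa using Complex.abs_im_le_norm (μ - lam)
      have h2 : |lam.im| - |μ.im| ≤ |μ.im - lam.im| := by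
        rw [abs_sub_comm]
        exact abs_sub_abs_le_abs_sub _ _
      have h3 : δ ≤ a / 2 := min_le_left _ _
      linarith
    have hb1 : a * ‖(x : H) - (z : H)‖ ≤ dist μ lam * ‖(z : H)‖ := by
      have h := aux_lower S hsym lam (x - z)
      have heq : S (x - z) - lam • ((x - z : S.domain) : H) = (lam - μ) • (z : H) := by
        rw [LinearPMap.map_sub, Submodule.coe_sub, smul_sub]
        have hzz : S z = y + μ • (z : H) := by rw [← hz]; abel
        rw [hzz]
        have hxx : S x = y + lam • (x : H) := by rw [← hx]; abel
        rw [hxx, sub_smul]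
        abel
      rw [heq, norm_smul] at h
      have : ‖lam - μ‖ = dist μ lam := by
        rw [dist_comm, Complex.dist_eq]
      rw [this] at h
      exact h
    have hb2 : a / 2 * ‖(z : H)‖ ≤ ‖y‖ := by
      have h := aux_lower S hsym μ z
      rw [hz] at h
      calc a / 2 * ‖(z : H)‖ ≤ |μ.im| * ‖(z : H)‖ :=
            mul_le_mul_of_nonneg_right him (norm_nonneg _)
        _ ≤ ‖y‖ := h
    have hδ2 : δ ≤ ε * a ^ 2 / (2 * ‖y‖ + 2) := min_le_right _ _
    rw [dist_eq_norm]
    have hyn : (0:ℝ) ≤ ‖y‖ := norm_nonneg _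
    have hzn : (0:ℝ) ≤ ‖(z : H)‖ := norm_nonneg _
    have hxzn : (0:ℝ) ≤ ‖(x : H) - (z : H)‖ := norm_nonneg _
    -- a^2 * ‖x-z‖ ≤ d * a * ‖z‖ ≤ d * 2‖y‖ and d*(2‖y‖+2) < ε a^2
    have hkey : dist μ lam * (2 * ‖y‖ + 2) < ε * a ^ 2 := by
      have := hμd
      calc dist μ lam * (2 * ‖y‖ + 2) < δ * (2 * ‖y‖ + 2) := by
            apply mul_lt_mul_of_pos_right hμd; positivity
        _ ≤ ε * a ^ 2 / (2 * ‖y‖ + 2) * (2 * ‖y‖ + 2) := by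
            apply mul_le_mul_of_nonneg_right hδ2; positivity
        _ = ε * a ^ 2 := by field_simp
    nlinarith [mul_le_mul_of_nonneg_left hb2 hdnn, mul_le_mul_of_nonneg_left hb1 ha0.le]
  · exact aux_orth S hsym hclosed lam nu (hOmim lam hlam) hne y
      ((hMmem y).mp hy lam hlam) x hx

/-- Let `S` be a closed symmetric operator in a Hilbert space `H`, let
`𝒪 ⊆ ℂ⁺` be open and nonempty, `𝒪*` its conjugate set, and
`M = ⋂_{λ ∈ 𝒪 ∪ 𝒪*} ran (S - λ)`.  Then the restriction `S_M = S ↾ (M ∩ dom S)` is a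
selfadjoint operator in the Hilbert space `M`: it maps `M ∩ dom S` into `M`, it is
symmetric, and (the range criterion for selfadjointness of a symmetric operator) for every
`ν ∈ 𝒪` one has `ran (S_M - ν) = M = ran (S_M - conj ν)`. -/
theorem restriction_to_inter_ranges_selfadjoint
    {H : Type*} [NormedAddCommGroup H] [InnerProductSpace ℂ H] [CompleteSpace H]
    (S : H →ₗ.[ℂ] H)
    (hsym : ∀ x y : S.domain, ⟪S x, (y : H)⟫ = ⟪(x : H), S y⟫)
    (hclosed : S.IsClosed)
    (O : Set ℂ) (hO : IsOpen O) (hOne : O.Nonempty) (hOup : ∀ lam ∈ O, 0 < lam.im)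
    (M : Set H)
    (hM : M = ⋂ lam ∈ O ∪ (fun z => conj z) '' O,
      {y : H | ∃ x : S.domain, S x - lam • (x : H) = y}) :
    (∀ u : S.domain, (u : H) ∈ M → S u ∈ M) ∧
    (∀ nu ∈ O,
      {y : H | ∃ x : S.domain, (x : H) ∈ M ∧ S x - nu • (x : H) = y} = M ∧
      {y : H | ∃ x : S.domain, (x : H) ∈ M ∧ S x - (conj nu) • (x : H) = y} = M) := by
  set Om : Set ℂ := O ∪ (fun z => conj z) '' O with hOm
  have hOmim : ∀ l ∈ Om, l.im ≠ 0 := by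
    rintro l (hl | ⟨w, hw, rfl⟩)
    · exact ne_of_gt (hOup l hl)
    · simp only [Complex.conj_im]
      exact neg_ne_zero.mpr (ne_of_gt (hOup w hw))
  have hMmem : ∀ z, z ∈ M ↔ ∀ l ∈ Om, ∃ x : S.domain, S x - l • (x : H) = z := by
    intro z
    rw [hM]
    simp only [Set.mem_iInter, Set.mem_setOf_eq]
  -- the easy inclusion, for any complex number l
  have hsub : ∀ l : ℂ, {y : H | ∃ x : S.domain, (x : H) ∈ M ∧ S x - l • (x : H) = y} ⊆ M := by
    rintro l y ⟨x, hxM, rfl⟩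
    rw [hMmem]
    intro lam hlam
    obtain ⟨x0, hx0⟩ := (hMmem _).mp hxM lam hlam
    refine ⟨x + (lam - l) • x0, ?_⟩
    rw [LinearPMap.map_add, LinearPMap.map_smul, Submodule.coe_add, Submodule.coe_smul]
    calc S x + (lam - l) • S x0 - lam • ((x : H) + (lam - l) • (x0 : H))
        = (S x - lam • (x : H)) + (lam - l) • (S x0 - lam • (x0 : H)) := by
          rw [smul_add, smul_sub]
          rw [smul_comm lam (lam - l) ((x0 : H))]
          abel
      _ = S x - l • (x : H) := by
          rw [hx0, sub_smul]
          abel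
  -- nearby points in O
  have hball : ∀ nu ∈ O, ∀ δ > (0:ℝ), ∃ t : ℝ, t ≠ 0 ∧ |t| < δ ∧ nu + (t : ℂ) ∈ O := by
    intro nu hnu δ hδ
    obtain ⟨r, hr, hrball⟩ := Metric.isOpen_iff.mp hO nu hnu
    refine ⟨min δ r / 2, by positivity, ?_, ?_⟩
    · rw [abs_of_pos (by positivity)]
      have := min_le_left δ r
      linarith
    · apply hrball
      rw [Metric.mem_ball, Complex.dist_eq, add_sub_cancel_left]
      rw [Complex.norm_real, Real.norm_eq_abs, abs_of_pos (by positivity)]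
      have := min_le_right δ r
      linarith
  constructor
  · -- invariance
    intro u hu
    rw [hMmem]
    intro l hl
    obtain ⟨x0, hx0⟩ := (hMmem _).mp hu l hl
    refine ⟨u + l • x0, ?_⟩
    rw [LinearPMap.map_add, LinearPMap.map_smul, Submodule.coe_add, Submodule.coe_smul]
    calc S u + l • S x0 - l • ((u : H) + l • (x0 : H))
        = (S u - l • (u : H)) + l • (S x0 - l • (x0 : H)) := by
          rw [smul_add, smul_sub]
          abel
      _ = S u - l • (u : H) + l • (u : H) := by rw [hx0]
      _ = S u := by abel
  · intro nu hnu
    have hnuOm : nu ∈ Om := Or.inl hnu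
    have hcnuOm : conj nu ∈ Om := Or.inr ⟨nu, hnu, rfl⟩
    have hacc1 : ∀ δ > (0:ℝ), ∃ μ ∈ Om, μ ≠ nu ∧ dist μ nu < δ := by
      intro δ hδ
      obtain ⟨t, ht0, htδ, htO⟩ := hball nu hnu δ hδ
      refine ⟨nu + (t : ℂ), Or.inl htO, ?_, ?_⟩
      · intro h
        exact ht0 (by exact_mod_cast add_eq_left.mp h)
      · rw [Complex.dist_eq, add_sub_cancel_left, Complex.norm_real, Real.norm_eq_abs]
        exact htδ
    have hacc2 : ∀ δ > (0:ℝ), ∃ μ ∈ Om, μ ≠ conj nu ∧ dist μ (conj nu) < δ := by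
      intro δ hδ
      obtain ⟨t, ht0, htδ, htO⟩ := hball nu hnu δ hδ
      refine ⟨conj nu + (t : ℂ), Or.inr ⟨nu + (t : ℂ), htO, by
        simp [map_add, Complex.conj_ofReal]⟩, ?_, ?_⟩
      · intro h
        exact ht0 (by exact_mod_cast add_eq_left.mp h)
      · rw [Complex.dist_eq, add_sub_cancel_left, Complex.norm_real, Real.norm_eq_abs]
        exact htδ
    constructor
    · apply Set.Subset.antisymm (hsub nu)
      intro y hy
      obtain ⟨x, hxM, hx⟩ := aux_surj S hsym hclosed Om hOmim M hMmem nu hnuOm hacc1 y hy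
      exact ⟨x, hxM, hx⟩
    · apply Set.Subset.antisymm (hsub (conj nu))
      intro y hy
      obtain ⟨x, hxM, hx⟩ := aux_surj S hsym hclosed Om hOmim M hMmem (conj nu) hcnuOm hacc2 y hy
      exact ⟨x, hxM, hx⟩
end

section
/- Let A₁, A₂ be selfadjoint operators in a Hilbert space H, and suppose there exist families of vectors such that span{γ₁(λ)φ : φ ∈ Φ, λ ∈ ℂ \ ℝ} and span{γ₂(λ)φ : φ ∈ Φ, λ ∈ ℂ \ ℝ} are dense in H, where γᵢ(λ) = (I + (λ-μ)(Aᵢ-λ)^{-1})γᵢ(μ) for all λ, μ ∈ ℂ \ ℝ, and (γ₁(λ)φ, γ₁(μ)ψ) = (γ₂(λ)φ, γ₂(μ)ψ) for all λ, μ ∈ ℂ \ ℝ and all φ, ψ ∈ Φ. Then the map V: Σⱼ γ₁(λⱼ)φⱼ ↦ Σⱼ γ₂(λⱼ)φⱼ is well-defined and isometric, its closure U is a unitary operator on H, U(A₁-λ)^{-1} = (A₂-λ)^{-1}U for all λ ∈ ℂ \ ℝ, and A₁ and A₂ are unitarily equivalent. -/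
open scoped ComplexConjugate
local notation "⟪" x ", " y "⟫" => @inner ℂ _ _ x y

/-- Abstract uniqueness argument: `A₁, A₂` are selfadjoint operators in
`H` with resolvents `R₁, R₂`, and `γ₁, γ₂ : (ℂ \ ℝ) × Φ → H` are abstract Poisson
operators satisfying the resolvent-type identity and having dense spans, such that all
inner products `(γᵢ(λ)φ, γᵢ(μ)ψ)` agree for `i = 1, 2`.  Then the map
`V : Σⱼ γ₁(λⱼ)φⱼ ↦ Σⱼ γ₂(λⱼ)φⱼ` is well defined and isometric and its closure `U` is a
unitary operator intertwining the two resolvents, `U (A₁-λ)⁻¹ = (A₂-λ)⁻¹ U`, and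
`U A₁ = A₂ U`, i.e. `A₁` and `A₂` are unitarily equivalent. -/
theorem unitary_equivalence_from_poisson_data
    {H Φ : Type*} [NormedAddCommGroup H] [InnerProductSpace ℂ H] [CompleteSpace H]
    (A₁ A₂ : H →ₗ.[ℂ] H) (hA₁ : IsSelfAdjoint A₁) (hA₂ : IsSelfAdjoint A₂)
    (R₁ R₂ : ℂ → H →L[ℂ] H)
    (hR₁ : ∀ lam : ℂ, lam.im ≠ 0 →
      (∀ x : A₁.domain, R₁ lam (A₁ x - lam • (x : H)) = x) ∧
      (∀ y : H, ∃ x : A₁.domain, (x : H) = R₁ lam y ∧ A₁ x - lam • (x : H) = y))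
    (hR₂ : ∀ lam : ℂ, lam.im ≠ 0 →
      (∀ x : A₂.domain, R₂ lam (A₂ x - lam • (x : H)) = x) ∧
      (∀ y : H, ∃ x : A₂.domain, (x : H) = R₂ lam y ∧ A₂ x - lam • (x : H) = y))
    (γ₁ γ₂ : ℂ → Φ → H)
    (hres₁ : ∀ lam mu : ℂ, lam.im ≠ 0 → mu.im ≠ 0 → ∀ φ : Φ,
      γ₁ lam φ = γ₁ mu φ + (lam - mu) • R₁ lam (γ₁ mu φ))
    (hres₂ : ∀ lam mu : ℂ, lam.im ≠ 0 → mu.im ≠ 0 → ∀ φ : Φ,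
      γ₂ lam φ = γ₂ mu φ + (lam - mu) • R₂ lam (γ₂ mu φ))
    (hdense₁ : Dense (↑(Submodule.span ℂ
      {x : H | ∃ lam : ℂ, ∃ φ : Φ, lam.im ≠ 0 ∧ γ₁ lam φ = x}) : Set H))
    (hdense₂ : Dense (↑(Submodule.span ℂ
      {x : H | ∃ lam : ℂ, ∃ φ : Φ, lam.im ≠ 0 ∧ γ₂ lam φ = x}) : Set H))
    (hiso : ∀ lam mu : ℂ, lam.im ≠ 0 → mu.im ≠ 0 → ∀ φ ψ : Φ,
      ⟪γ₁ mu ψ, γ₁ lam φ⟫ = ⟪γ₂ mu ψ, γ₂ lam φ⟫) :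
    ∃ U : H ≃ₗᵢ[ℂ] H,
      (∀ lam : ℂ, lam.im ≠ 0 → ∀ φ : Φ, U (γ₁ lam φ) = γ₂ lam φ) ∧
      (∀ lam : ℂ, lam.im ≠ 0 → ∀ u : H, U (R₁ lam u) = R₂ lam (U u)) ∧
      (∀ u : A₁.domain, ∃ v : A₂.domain, (v : H) = U u ∧ A₂ v = U (A₁ u)) ∧
      (∀ v : A₂.domain, ∃ u : A₁.domain, (u : H) = U.symm v ∧ A₁ u = U.symm (A₂ v)) := by
  classical
  -- Symmetry of A₁ on its domain
  have hsym₁ : ∀ x y : A₁.domain, ⟪A₁ x, (y : H)⟫ = ⟪(x : H), A₁ y⟫ := by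
    have h := LinearPMap.adjoint_isFormalAdjoint hA₁.dense_domain
    rw [LinearPMap.isSelfAdjoint_def.mp hA₁] at h
    exact h
  -- Resolvent norm bound
  have hbd : ∀ (A : H →ₗ.[ℂ] H) (R : ℂ → H →L[ℂ] H),
      (∀ x y : A.domain, ⟪A x, (y : H)⟫ = ⟪(x : H), A y⟫) →
      ∀ lam : ℂ, lam.im ≠ 0 →
      (∀ y : H, ∃ x : A.domain, (x : H) = R lam y ∧ A x - lam • (x : H) = y) →
      ∀ y : H, ‖R lam y‖ ≤ ‖y‖ / |lam.im| := by
    intro A R hsym lam hlam hR y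
    obtain ⟨x, hx1, hx2⟩ := hR y
    rw [← hx1]
    have hreal : (⟪(x : H), A x⟫).im = 0 := by
      have h1 : conj ⟪(x : H), A x⟫ = ⟪(x : H), A x⟫ := by
        rw [inner_conj_symm]
        exact hsym x x
      exact Complex.conj_eq_iff_im.mp h1
    have hinner : ⟪(x : H), y⟫ = ⟪(x : H), A x⟫ - lam * ((‖(x : H)‖ ^ 2 : ℝ) : ℂ) := by
      rw [← hx2, inner_sub_right, inner_smul_right, inner_self_eq_norm_sq_to_K]
      norm_num
    have him : |(⟪(x : H), y⟫).im| = |lam.im| * ‖(x : H)‖ ^ 2 := by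
      have him0 : (⟪(x : H), y⟫).im = -(lam.im * ‖(x : H)‖ ^ 2) := by
        rw [hinner, Complex.sub_im, Complex.mul_im]
        simp [hreal, ← Complex.ofReal_pow]
      rw [him0, abs_neg, abs_mul, abs_of_nonneg (by positivity : (0:ℝ) ≤ ‖(x:H)‖ ^ 2)]
    have hle : |lam.im| * ‖(x : H)‖ ^ 2 ≤ ‖(x : H)‖ * ‖y‖ := by
      rw [← him]
      calc |(⟪(x : H), y⟫).im| ≤ ‖⟪(x : H), y⟫‖ := Complex.abs_im_le_norm _
        _ = ‖⟪(x : H), y⟫‖ := rfl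
        _ ≤ ‖(x : H)‖ * ‖y‖ := norm_inner_le_norm _ _
    have hlpos : (0 : ℝ) < |lam.im| := abs_pos.mpr hlam
    rw [le_div_iff₀ hlpos]
    rcases eq_or_lt_of_le (norm_nonneg (x : H)) with h0 | h0
    · rw [← h0]; simpa using norm_nonneg y
    · nlinarith
  -- The graph submodule and its closure
  set S : Set (H × H) :=
    {p | ∃ lam : ℂ, ∃ φ : Φ, lam.im ≠ 0 ∧ (γ₁ lam φ, γ₂ lam φ) = p} with hS
  set G : Submodule ℂ (H × H) := Submodule.span ℂ S with hGdef
  set G' : Submodule ℂ (H × H) := G.topologicalClosure with hG'def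
  have key0 : ∀ p ∈ G, ∀ q ∈ G, ⟪p.1, q.1⟫ = ⟪p.2, q.2⟫ := by
    intro p hp
    induction hp using Submodule.span_induction with
    | mem x hx =>
      intro q hq
      induction hq using Submodule.span_induction with
      | mem y hy =>
        obtain ⟨lam, φ, hlam, rfl⟩ := hx
        obtain ⟨mu, ψ, hmu, rfl⟩ := hy
        exact hiso mu lam hmu hlam ψ φ
      | zero => simp
      | add y z hy hz ihy ihz => simp only [Prod.fst_add, Prod.snd_add, inner_add_right, ihy, ihz]
      | smul c y hy ihy => simp only [Prod.smul_fst, Prod.smul_snd, inner_smul_right, ihy]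
    | zero => intro q hq; simp
    | add x y hx hy ihx ihy =>
      intro q hq
      simp only [Prod.fst_add, Prod.snd_add, inner_add_left, ihx q hq, ihy q hq]
    | smul c x hx ihx =>
      intro q hq
      simp only [Prod.smul_fst, Prod.smul_snd, inner_smul_left, ihx q hq]
  have key : ∀ p ∈ G', ∀ q ∈ G', ⟪p.1, q.1⟫ = ⟪p.2, q.2⟫ := by
    have step1 : ∀ q ∈ G, ∀ p ∈ G', ⟪p.1, q.1⟫ = ⟪p.2, q.2⟫ := by
      intro q hq p hp
      have hclosed : IsClosed {p : H × H | ⟪p.1, q.1⟫ = ⟪p.2, q.2⟫} :=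
        isClosed_eq (continuous_fst.inner continuous_const)
          (continuous_snd.inner continuous_const)
      have hsub : (G' : Set (H × H)) ⊆ {p : H × H | ⟪p.1, q.1⟫ = ⟪p.2, q.2⟫} := by
        rw [hG'def, Submodule.topologicalClosure_coe]
        exact closure_minimal (fun p hp => key0 p hp q hq) hclosed
      exact hsub hp
    intro p hp q hq
    have hclosed : IsClosed {q : H × H | ⟪p.1, q.1⟫ = ⟪p.2, q.2⟫} :=
      isClosed_eq ((continuous_const (y := p.1)).inner continuous_fst)
        ((continuous_const (y := p.2)).inner continuous_snd)
    have hsub : (G' : Set (H × H)) ⊆ {q : H × H | ⟪p.1, q.1⟫ = ⟪p.2, q.2⟫} := by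
      rw [hG'def, Submodule.topologicalClosure_coe]
      exact closure_minimal (fun q hq' => step1 q hq' p hp) hclosed
    exact hsub hq
  have hnorm : ∀ p : G', ‖((p : H × H)).1‖ = ‖((p : H × H)).2‖ := by
    intro p
    have h := key _ p.2 _ p.2
    rw [inner_self_eq_norm_sq_to_K, inner_self_eq_norm_sq_to_K] at h
    have h3 : ‖((p : H × H)).1‖ ^ 2 = ‖((p : H × H)).2‖ ^ 2 := by
      exact_mod_cast h
    nlinarith [norm_nonneg ((p : H × H)).1, norm_nonneg ((p : H × H)).2]
  haveI : CompleteSpace G' := G.isClosed_topologicalClosure.completeSpace_coe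
  have hnormmax : ∀ p : G', ‖(p : H × H)‖ = ‖((p : H × H)).1‖ := by
    intro p
    rw [Prod.norm_def, ← hnorm p, max_self]
  let f₁ : G' →ₗᵢ[ℂ] H :=
    { toLinearMap := (LinearMap.fst ℂ H H).comp G'.subtype
      norm_map' := fun p => by
        simpa using (hnormmax p).symm }
  let f₂ : G' →ₗᵢ[ℂ] H :=
    { toLinearMap := (LinearMap.snd ℂ H H).comp G'.subtype
      norm_map' := fun p => by
        have : ‖(p : H × H)‖ = ‖((p : H × H)).2‖ := by rw [hnormmax p, hnorm p]
        simpa using this.symm }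
  have hmemG' : ∀ lam : ℂ, lam.im ≠ 0 → ∀ φ : Φ, (γ₁ lam φ, γ₂ lam φ) ∈ G' :=
    fun lam hlam φ => Submodule.le_topologicalClosure G
      (Submodule.subset_span ⟨lam, φ, hlam, rfl⟩)
  have hsurj : ∀ (f : G' →ₗᵢ[ℂ] H) (γ : ℂ → Φ → H),
      Dense (↑(Submodule.span ℂ
        {x : H | ∃ lam : ℂ, ∃ φ : Φ, lam.im ≠ 0 ∧ γ lam φ = x}) : Set H) →
      (∀ lam : ℂ, lam.im ≠ 0 → ∀ φ : Φ, γ lam φ ∈ Set.range f) →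
      Function.Surjective f := by
    intro f γ hdense hgen
    have hclosed : IsClosed (Set.range f) := f.isometry.isClosedEmbedding.isClosed_range
    intro y
    have hsub : (↑(Submodule.span ℂ
        {x : H | ∃ lam : ℂ, ∃ φ : Φ, lam.im ≠ 0 ∧ γ lam φ = x}) : Set H) ⊆ Set.range f := by
      intro x hx
      have : Submodule.span ℂ {x : H | ∃ lam : ℂ, ∃ φ : Φ, lam.im ≠ 0 ∧ γ lam φ = x}
          ≤ LinearMap.range f.toLinearMap := by
        rw [Submodule.span_le]
        rintro z ⟨lam, φ, hlam, rfl⟩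
        obtain ⟨w, hw⟩ := hgen lam hlam φ
        exact ⟨w, hw⟩
      exact this hx
    have : y ∈ closure (Set.range f) :=
      closure_mono hsub (by rw [hdense.closure_eq]; trivial)
    rwa [hclosed.closure_eq] at this
  have hsurj₁ : Function.Surjective f₁ :=
    hsurj f₁ γ₁ hdense₁ (fun lam hlam φ => ⟨⟨_, hmemG' lam hlam φ⟩, rfl⟩)
  have hsurj₂ : Function.Surjective f₂ :=
    hsurj f₂ γ₂ hdense₂ (fun lam hlam φ => ⟨⟨_, hmemG' lam hlam φ⟩, rfl⟩)
  let U₁ : G' ≃ₗᵢ[ℂ] H := LinearIsometryEquiv.ofSurjective f₁ hsurj₁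
  let U₂ : G' ≃ₗᵢ[ℂ] H := LinearIsometryEquiv.ofSurjective f₂ hsurj₂
  have hU₁ : ∀ p : G', U₁ p = ((p : H × H)).1 := fun p => by
    rw [show (U₁ : G' → H) = f₁ from LinearIsometryEquiv.coe_ofSurjective f₁ hsurj₁]; rfl
  have hU₂ : ∀ p : G', U₂ p = ((p : H × H)).2 := fun p => by
    rw [show (U₂ : G' → H) = f₂ from LinearIsometryEquiv.coe_ofSurjective f₂ hsurj₂]; rfl
  let U : H ≃ₗᵢ[ℂ] H := U₁.symm.trans U₂
  have hUγ : ∀ lam : ℂ, lam.im ≠ 0 → ∀ φ : Φ, U (γ₁ lam φ) = γ₂ lam φ := by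
    intro lam hlam φ
    set p : G' := ⟨(γ₁ lam φ, γ₂ lam φ), hmemG' lam hlam φ⟩ with hp
    have h1 : U₁.symm (γ₁ lam φ) = p := by
      apply U₁.injective
      rw [LinearIsometryEquiv.apply_symm_apply, hU₁ p]
    show U₂ (U₁.symm (γ₁ lam φ)) = γ₂ lam φ
    rw [h1, hU₂ p]
  -- intertwining of resolvents
  have hUR : ∀ lam : ℂ, lam.im ≠ 0 → ∀ u : H, U (R₁ lam u) = R₂ lam (U u) := by
    intro lam hlam
    let Uc : H →L[ℂ] H := U.toLinearIsometry.toContinuousLinearMap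
    have hUc : ∀ x : H, Uc x = U x := fun _ => rfl
    set Dm : H →L[ℂ] H := (R₂ lam).comp Uc - Uc.comp (R₁ lam) with hDm
    have hres : ∀ mu : ℂ, mu.im ≠ 0 → mu ≠ lam → ∀ ψ : Φ, γ₁ mu ψ ∈ LinearMap.ker (Dm : H →ₗ[ℂ] H) := by
      intro mu hmu hne ψ
      have hnz : lam - mu ≠ 0 := sub_ne_zero.mpr (Ne.symm hne)
      have h1 : R₁ lam (γ₁ mu ψ) = (lam - mu)⁻¹ • (γ₁ lam ψ - γ₁ mu ψ) := by
        have := hres₁ lam mu hlam hmu ψ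
        have h2 : (lam - mu) • R₁ lam (γ₁ mu ψ) = γ₁ lam ψ - γ₁ mu ψ := by
          rw [this]; abel
        rw [← h2, smul_smul, inv_mul_cancel₀ hnz, one_smul]
      have h2 : R₂ lam (γ₂ mu ψ) = (lam - mu)⁻¹ • (γ₂ lam ψ - γ₂ mu ψ) := by
        have := hres₂ lam mu hlam hmu ψ
        have h2 : (lam - mu) • R₂ lam (γ₂ mu ψ) = γ₂ lam ψ - γ₂ mu ψ := by
          rw [this]; abel
        rw [← h2, smul_smul, inv_mul_cancel₀ hnz, one_smul]
      rw [LinearMap.mem_ker]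
      show R₂ lam (Uc (γ₁ mu ψ)) - Uc (R₁ lam (γ₁ mu ψ)) = 0
      rw [hUc, hUc, hUγ mu hmu ψ, h1, h2, map_smul, map_sub, hUγ lam hlam ψ, hUγ mu hmu ψ,
        sub_self]
    have hgen : ∀ mu : ℂ, mu.im ≠ 0 → ∀ ψ : Φ, γ₁ mu ψ ∈ LinearMap.ker (Dm : H →ₗ[ℂ] H) := by
      intro mu hmu ψ
      by_cases hne : mu = lam
      · subst hne
        -- approximate γ₁ mu ψ by γ₁ (mu + 1/(n+1)) ψ
        have hker : IsClosed (LinearMap.ker (Dm : H →ₗ[ℂ] H) : Set H) := ContinuousLinearMap.isClosed_ker Dm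
        set seq : ℕ → H := fun n => γ₁ (mu + (((n : ℝ) + 1)⁻¹ : ℝ)) ψ with hseq
        have hmem : ∀ n : ℕ, seq n ∈ (LinearMap.ker (Dm : H →ₗ[ℂ] H) : Set H) := by
          intro n
          have hr : (0:ℝ) < (n : ℝ) + 1 := by positivity
          have him : (mu + ((((n : ℝ) + 1)⁻¹ : ℝ) : ℂ)).im = mu.im := by
            simp [Complex.add_im]
          apply hres
          · rw [him]; exact hmu
          · intro hcon
            have : ((((n : ℝ) + 1)⁻¹ : ℝ) : ℂ) = 0 := by
              have := congrArg (fun z => z - mu) hcon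
              simpa using this
            rw [Complex.ofReal_eq_zero] at this
            exact (inv_pos.mpr hr).ne' this
        have htend : Filter.Tendsto seq Filter.atTop (nhds (γ₁ mu ψ)) := by
          rw [tendsto_iff_norm_sub_tendsto_zero]
          have hbound : ∀ n : ℕ, ‖seq n - γ₁ mu ψ‖ ≤
              (‖γ₁ mu ψ‖ / |mu.im|) * (1 / ((n : ℝ) + 1)) := by
            intro n
            have hr : (0:ℝ) < (n : ℝ) + 1 := by positivity
            set mun : ℂ := mu + ((((n : ℝ) + 1)⁻¹ : ℝ) : ℂ) with hmun
            have him : mun.im = mu.im := by simp [hmun, Complex.add_im]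
            have hmuim : mun.im ≠ 0 := by rw [him]; exact hmu
            have h1 := hres₁ mun mu hmuim hmu ψ
            have h2 : seq n - γ₁ mu ψ = (mun - mu) • R₁ mun (γ₁ mu ψ) := by
              rw [hseq]; simp only []
              rw [show γ₁ mun ψ = _ from h1]; abel
            rw [h2, norm_smul]
            have h3 : ‖R₁ mun (γ₁ mu ψ)‖ ≤ ‖γ₁ mu ψ‖ / |mun.im| :=
              hbd A₁ R₁ hsym₁ mun hmuim (hR₁ mun hmuim).2 (γ₁ mu ψ)
            have h4 : ‖mun - mu‖ = ((n : ℝ) + 1)⁻¹ := by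
              rw [hmun]
              simp only [add_sub_cancel_left]
              rw [Complex.norm_real, Real.norm_eq_abs, abs_of_pos (inv_pos.mpr hr)]
            rw [him] at h3
            rw [h4]
            rw [one_div]
            rw [mul_comm]
            exact mul_le_mul_of_nonneg_right h3 (by positivity)
          have hzero : Filter.Tendsto (fun n : ℕ =>
              (‖γ₁ mu ψ‖ / |mu.im|) * (1 / ((n : ℝ) + 1))) Filter.atTop (nhds 0) := by
            have := tendsto_one_div_add_atTop_nhds_zero_nat.const_mul (‖γ₁ mu ψ‖ / |mu.im|)
            simpa using this
          exact squeeze_zero (fun n => norm_nonneg _) hbound hzero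
        exact hker.mem_of_tendsto htend (Filter.Eventually.of_forall hmem)
      · exact hres mu hmu hne ψ
    have hall : ∀ u : H, Dm u = 0 := by
      have hsub : (↑(Submodule.span ℂ
          {x : H | ∃ lam : ℂ, ∃ φ : Φ, lam.im ≠ 0 ∧ γ₁ lam φ = x}) : Set H)
          ⊆ (LinearMap.ker (Dm : H →ₗ[ℂ] H) : Set H) := by
        intro x hx
        have : Submodule.span ℂ {x : H | ∃ lam : ℂ, ∃ φ : Φ, lam.im ≠ 0 ∧ γ₁ lam φ = x}
            ≤ LinearMap.ker (Dm : H →ₗ[ℂ] H) := by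
          rw [Submodule.span_le]
          rintro z ⟨mu, ψ, hmu, rfl⟩
          exact hgen mu hmu ψ
        exact this hx
      intro u
      have : u ∈ closure (LinearMap.ker (Dm : H →ₗ[ℂ] H) : Set H) :=
        closure_mono hsub (by rw [hdense₁.closure_eq]; trivial)
      rwa [(show IsClosed (LinearMap.ker (Dm : H →ₗ[ℂ] H) : Set H) from ContinuousLinearMap.isClosed_ker Dm).closure_eq, SetLike.mem_coe, LinearMap.mem_ker] at this
    intro u
    have := hall u
    have h2 : R₂ lam (Uc u) - Uc (R₁ lam u) = 0 := this
    rw [hUc, hUc] at h2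
    rw [← sub_eq_zero]
    rw [sub_eq_zero] at h2 ⊢
    exact h2.symm
  have hURsymm : ∀ lam : ℂ, lam.im ≠ 0 → ∀ w : H, U.symm (R₂ lam w) = R₁ lam (U.symm w) := by
    intro lam hlam w
    have := hUR lam hlam (U.symm w)
    rw [U.apply_symm_apply] at this
    rw [← this, U.symm_apply_apply]
  refine ⟨U, hUγ, hUR, ?_, ?_⟩
  · intro u
    have hlam : (Complex.I).im ≠ 0 := by simp
    have h1 := (hR₁ Complex.I hlam).1 u
    obtain ⟨v, hv1, hv2⟩ := (hR₂ Complex.I hlam).2 (U (A₁ u - Complex.I • (u : H)))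
    have hvU : (v : H) = U u := by
      rw [hv1, ← hUR Complex.I hlam, h1]
    refine ⟨v, hvU, ?_⟩
    have h3 : A₂ v = U (A₁ u - Complex.I • (u : H)) + Complex.I • (v : H) := by
      rw [← hv2]; abel
    rw [h3, hvU, map_sub, map_smul]
    abel
  · intro v
    have hlam : (Complex.I).im ≠ 0 := by simp
    have h1 := (hR₂ Complex.I hlam).1 v
    obtain ⟨u, hu1, hu2⟩ := (hR₁ Complex.I hlam).2 (U.symm (A₂ v - Complex.I • (v : H)))
    have huU : (u : H) = U.symm v := by
      rw [hu1, ← hURsymm Complex.I hlam, h1]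
    refine ⟨u, huU, ?_⟩
    have h3 : A₁ u = U.symm (A₂ v - Complex.I • (v : H)) + Complex.I • (u : H) := by
      rw [← hu2]; abel
    rw [h3, huU, map_sub, map_smul]
    abel
end

section
/- In the Calderón-type setting, let λ be an eigenvalue of A, let E_λ be the spectral projection onto ker(A - λ), and let η, μ ∈ ℂ \ ℝ with η ≠ μ̄. Then for all φ, ψ ∈ H^{1/2}(∂Ω): (Res_λ M φ, ψ) = (η - λ)(μ̄ - λ)(E_λ γ(η)φ, γ(μ)ψ)_{L²(Ω)}. -/
open scoped ComplexConjugate Topology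
local notation "⟪" x ", " y "⟫" => @inner ℂ _ _ x y

set_option maxHeartbeats 1600000 in
/-- Abstract Calderón-type model.  Let `λ ∈ ℝ` be an eigenvalue of the
Dirichlet operator `A`, `E_λ = P` the orthogonal projection onto `ker (A - λ)`, and let
`η, μ ∈ ℂ \ ℝ` with `η ≠ μ̄` lie in the resolvent set `ρ`.  Let `Res_λ M : B → Bm` be the
residue of the (meromorphic, simple-pole) Dirichlet-to-Neumann map
`ζ ↦ M(ζ)φ = ntr (γ(ζ)φ)` at `λ`.  Then for all `φ, ψ ∈ H^{1/2}(∂Ω)`: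
`(Res_λ M φ, ψ) = (η - λ)(μ̄ - λ)(E_λ γ(η)φ, γ(μ)ψ)_{L²(Ω)}`  (paper pairing
`(a,b)_{L²} = ⟪b,a⟫` in Mathlib's convention). -/
theorem residue_of_dtn_formula
    {H B Bm : Type*} [NormedAddCommGroup H] [InnerProductSpace ℂ H] [CompleteSpace H]
    [AddCommGroup B] [Module ℂ B] [AddCommGroup Bm] [Module ℂ Bm]
    (p : Bm →ₗ[ℂ] B →ₗ[ℂ] ℂ)
    (T : H →ₗ.[ℂ] H)
    (tr : T.domain →ₗ[ℂ] B) (ntr : T.domain →ₗ[ℂ] Bm)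
    (A : H →ₗ.[ℂ] H) (hA : IsSelfAdjoint A) (hAT : A ≤ T)
    (hAdom : ∀ u : T.domain, ((u : H) ∈ A.domain ↔ tr u = 0))
    (ρ : Set ℂ) (R : ℂ → H →L[ℂ] H)
    (hR : ∀ z ∈ ρ, (∀ x : A.domain, R z (A x - z • (x : H)) = x) ∧
      (∀ y : H, ∃ x : A.domain, (x : H) = R z y ∧ A x - z • (x : H) = y))
    (γ : ℂ → B → T.domain)
    (hγ : ∀ z ∈ ρ, ∀ φ : B, T (γ z φ) = z • ((γ z φ : H)) ∧ tr (γ z φ) = φ)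
    (hkey1 : ∀ z ∈ ρ, ∀ w ∈ ρ, ∀ φ : B,
      (γ z φ : H) - (γ w φ : H) = (z - w) • R z ((γ w φ : H)))
    (hkey2 : ∀ z ∈ ρ, ∀ w ∈ ρ, ∀ φ ψ : B,
      (conj w - z) * ⟪(γ w ψ : H), (γ z φ : H)⟫ =
        p (ntr (γ z φ)) ψ - conj (p (ntr (γ w ψ)) φ))
    (lam : ℝ) (hev : ∃ x : A.domain, (x : H) ≠ 0 ∧ A x = (lam : ℂ) • (x : H))
    (hpunct : ∀ᶠ z in 𝓝[≠] (lam : ℂ), z ∈ ρ)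
    (P : H →L[ℂ] H)
    (hPran : ∀ x : H, ∃ px : A.domain, (px : H) = P x ∧ A px = (lam : ℂ) • P x)
    (hPfix : ∀ x : A.domain, A x = (lam : ℂ) • (x : H) → P (x : H) = x)
    (hPsym : ∀ x y : H, ⟪P x, y⟫ = ⟪x, P y⟫)
    (ResM : B → Bm)
    (hRes : ∀ φ ψ : B, ∃ g : ℂ → ℂ, AnalyticAt ℂ g (lam : ℂ) ∧
      ∀ᶠ z in 𝓝[≠] (lam : ℂ),
        p (ntr (γ z φ)) ψ = p (ResM φ) ψ / (z - (lam : ℂ)) + g z)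
    (eta mu : ℂ) (heta : eta ∈ ρ) (hmu : mu ∈ ρ)
    (hetaim : eta.im ≠ 0) (hmuim : mu.im ≠ 0) (hne : eta ≠ conj mu) :
    ∀ φ ψ : B,
      p (ResM φ) ψ =
        (eta - (lam : ℂ)) * (conj mu - (lam : ℂ)) * ⟪(γ mu ψ : H), P ((γ eta φ : H))⟫ := by
  intro φ ψ
  -- self-adjointness consequences
  have hAeq : A.adjoint = A := LinearPMap.isSelfAdjoint_def.mp hA
  have hdense : Dense (A.domain : Set H) := hA.dense_domain
  have hsymm : ∀ x y : A.domain, ⟪A x, (y : H)⟫ = ⟪(x : H), A y⟫ := by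
    have hfa := LinearPMap.adjoint_isFormalAdjoint hdense (T := A)
    rw [hAeq] at hfa
    exact fun x y => hfa x y
  -- abbreviations
  set x0 : H := ((γ eta φ : T.domain) : H) with hx0
  set v : H := ((γ mu ψ : T.domain) : H) with hv
  set w : H := x0 - P x0 with hw
  -- P is idempotent
  have hPP : ∀ u : H, P (P u) = P u := by
    intro u
    obtain ⟨pu, hpu1, hpu2⟩ := hPran u
    have h := hPfix pu (by rw [hpu1, hpu2])
    rw [hpu1] at h
    exact h
  have hPw : P w = 0 := by
    rw [hw, map_sub, hPP, sub_self]
  -- orthogonal to range of (A - lam) implies eigenvector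
  have heig : ∀ y : H, (∀ x : A.domain, ⟪A x - (lam : ℂ) • (x : H), y⟫ = 0) →
      ∃ hy : y ∈ A.domain, A ⟨y, hy⟩ = (lam : ℂ) • y := by
    intro y h0
    have hkeyy : ∀ x : A.domain, ⟪(lam : ℂ) • y, (x : H)⟫ = ⟪y, A x⟫ := by
      intro x
      have h1 : ⟪y, A x - (lam : ℂ) • (x : H)⟫ = 0 := by
        rw [← inner_conj_symm, h0 x, map_zero]
      rw [inner_sub_right, inner_smul_right, sub_eq_zero] at h1
      rw [inner_smul_left, Complex.conj_ofReal, ← h1]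
    have hmem : y ∈ A.adjoint.domain :=
      LinearPMap.mem_adjoint_domain_of_exists y ⟨(lam : ℂ) • y, hkeyy⟩
    have happ : A.adjoint ⟨y, hmem⟩ = (lam : ℂ) • y :=
      LinearPMap.adjoint_apply_eq hdense _ hkeyy
    have hle : A.adjoint ≤ A := le_of_eq hAeq
    have hmem' : y ∈ A.domain := hle.1 hmem
    refine ⟨hmem', ?_⟩
    have h2 : A.adjoint ⟨y, hmem⟩ = A ⟨y, hmem'⟩ := hle.2 rfl
    rw [← h2, happ]
  -- range submodule
  set S : A.domain →ₗ[ℂ] H := A.toFun - (lam : ℂ) • A.domain.subtype with hS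
  have hSapp : ∀ x : A.domain, S x = A x - (lam : ℂ) • (x : H) := by
    intro x; simp [hS]
  set K : Submodule ℂ H := LinearMap.range S with hK
  have hKperp : ∀ y ∈ Kᗮ, P y = y := by
    intro y hy
    have h0 : ∀ x : A.domain, ⟪A x - (lam : ℂ) • (x : H), y⟫ = 0 := by
      intro x
      have := (Submodule.mem_orthogonal K y).mp hy (S x) (LinearMap.mem_range_self S x)
      rwa [hSapp] at this
    obtain ⟨hym, hyA⟩ := heig y h0
    exact hPfix ⟨y, hym⟩ hyA
  have hQvK : v - P v ∈ K.topologicalClosure := by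
    rw [← Submodule.orthogonal_orthogonal_eq_closure]
    rw [Submodule.mem_orthogonal]
    intro u hu
    have hu' : P u = u := hKperp u hu
    calc ⟪u, v - P v⟫ = ⟪P u, v - P v⟫ := by rw [hu']
      _ = ⟪u, P (v - P v)⟫ := hPsym u (v - P v)
      _ = 0 := by rw [map_sub, hPP, sub_self, inner_zero_right]
  -- the path t ↦ lam + t i
  set m : ℝ → ℂ := fun t => (lam : ℂ) + (t : ℂ) * Complex.I with hmdef
  have hmne : ∀ t : ℝ, t ≠ 0 → m t ≠ (lam : ℂ) := by
    intro t ht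
    simp [hmdef, Complex.ext_iff, ht]
  have hmsub : ∀ t : ℝ, m t - (lam : ℂ) = (t : ℂ) * Complex.I := by
    intro t; simp [hmdef]
  have hmim : ∀ t : ℝ, (m t).im = t := by intro t; simp [hmdef]
  have hmn : Filter.Tendsto m (𝓝[≠] (0 : ℝ)) (𝓝 ((lam : ℂ))) := by
    have hc : Continuous m := by fun_prop
    have h1 := hc.tendsto 0
    simp only [hmdef] at h1 ⊢
    simpa using h1.mono_left nhdsWithin_le_nhds
  have hmtend : Filter.Tendsto m (𝓝[≠] (0 : ℝ)) (𝓝[≠] ((lam : ℂ))) := by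
    apply tendsto_nhdsWithin_of_tendsto_nhds_of_eventually_within _ hmn
    filter_upwards [self_mem_nhdsWithin] with t ht
    exact hmne t ht
  -- the key resolvent limit
  have hwlim : Filter.Tendsto (fun t : ℝ => (m t - (lam : ℂ)) * ⟪v, R (m t) w⟫)
      (𝓝[≠] (0 : ℝ)) (𝓝 0) := by
    rw [NormedAddCommGroup.tendsto_nhds_zero]
    intro ε hε
    have hmemcl : v - P v ∈ closure (K : Set H) := by
      rw [← Submodule.topologicalClosure_coe]
      exact hQvK
    set ε1 : ℝ := ε / (2 * (‖w‖ + 1)) with hε1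
    have hε1pos : 0 < ε1 := by positivity
    obtain ⟨b, hbK, hbd⟩ := Metric.mem_closure_iff.mp hmemcl ε1 hε1pos
    obtain ⟨y, hy⟩ := hbK
    set r : H := v - P v - b with hrdef
    have hr : ‖r‖ < ε1 := by
      rw [hrdef, ← dist_eq_norm]
      exact hbd
    set C1 : ℝ := (‖(y : H)‖ + 1) * (‖w‖ + 1) with hC1
    have hC1pos : 0 < C1 := by positivity
    set δ : ℝ := ε / (4 * C1) with hδ
    have hδpos : 0 < δ := by positivity
    have hsmall : ∀ᶠ t : ℝ in 𝓝[≠] (0 : ℝ), |t| < δ := by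
      have h := eventually_abs_sub_lt (0 : ℝ) hδpos
      simpa using h.filter_mono nhdsWithin_le_nhds
    filter_upwards [hmtend.eventually hpunct, self_mem_nhdsWithin, hsmall]
      with t hzρ ht0 htδ
    have ht0' : (t : ℝ) ≠ 0 := ht0
    obtain ⟨xu, hxu1, hxu2⟩ := (hR (m t) hzρ).2 w
    set u : H := R (m t) w with hu
    -- hxu1 : (xu : H) = u, hxu2 : A xu - m t • (xu : H) = w
    have hAxu : A xu = w + m t • u := by
      rw [← hxu1]
      exact sub_eq_iff_eq_add.mp hxu2
    have hreal : (⟪(xu : H), A xu⟫).im = 0 := by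
      apply Complex.conj_eq_iff_im.mp
      rw [inner_conj_symm]
      exact hsymm xu xu
    have habs : |t| * ‖(xu : H)‖ ^ 2 ≤ ‖(xu : H)‖ * ‖w‖ := by
      have h0 : ⟪(xu : H), w⟫ = ⟪(xu : H), A xu⟫ - m t * ⟪(xu : H), (xu : H)⟫ := by
        conv_lhs => rw [← hxu2]
        rw [inner_sub_right, inner_smul_right]
      have him2 : (⟪(xu : H), w⟫).im = -(t * ‖(xu : H)‖ ^ 2) := by
        have hre : (⟪(xu : H), (xu : H)⟫).re = ‖(xu : H)‖ ^ 2 :=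
          inner_self_eq_norm_sq (𝕜 := ℂ) ((xu : H))
        have him : (⟪(xu : H), (xu : H)⟫).im = 0 :=
          inner_self_im (𝕜 := ℂ) ((xu : H))
        rw [h0]
        simp [Complex.sub_im, Complex.mul_im, hreal, hmim t, hre, him]
        rw [← Complex.ofReal_pow, Complex.ofReal_re, Complex.ofReal_im]; ring
      have h1 : |(⟪(xu : H), w⟫).im| ≤ ‖⟪(xu : H), w⟫‖ := by
        simpa using Complex.abs_im_le_norm ⟪(xu : H), w⟫
      have h2 : ‖⟪(xu : H), w⟫‖ ≤ ‖(xu : H)‖ * ‖w‖ := norm_inner_le_norm _ _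
      have h3 : |t| * ‖(xu : H)‖ ^ 2 = |(⟪(xu : H), w⟫).im| := by
        rw [him2, abs_neg, abs_mul, abs_of_nonneg (sq_nonneg (‖(xu : H)‖))]
      linarith
    rw [hxu1] at habs
    have htu : |t| * ‖u‖ ≤ ‖w‖ := by
      rcases eq_or_ne (‖u‖) 0 with h | h
      · rw [h, mul_zero]
        exact norm_nonneg w
      · have hpos : 0 < ‖u‖ := lt_of_le_of_ne (norm_nonneg u) (Ne.symm h)
        nlinarith [abs_nonneg t]
    -- piece (a) : the P v component vanishes exactly
    obtain ⟨pv, hpv1, hpv2⟩ := hPran v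
    have ha0 : (m t - (lam : ℂ)) * ⟪P v, u⟫ = 0 := by
      have h1 : ⟪A pv, (xu : H)⟫ = ⟪(pv : H), A xu⟫ := hsymm pv xu
      rw [hpv2, hpv1, hxu1, hAxu, inner_smul_left, Complex.conj_ofReal,
        inner_add_right, inner_smul_right] at h1
      have h2 : ⟪P v, w⟫ = 0 := by
        rw [hPsym v w, hPw, inner_zero_right]
      rw [h2] at h1
      linear_combination -h1
    -- piece (b) : the range component is O(t)
    have hbid : ⟪b, u⟫ = ⟪(y : H), w⟫ + (m t - (lam : ℂ)) * ⟪(y : H), u⟫ := by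
      have h1 : ⟪A y, (xu : H)⟫ = ⟪(y : H), A xu⟫ := hsymm y xu
      rw [hxu1, hAxu, inner_add_right, inner_smul_right] at h1
      have h2 : b = A y - (lam : ℂ) • (y : H) := by rw [← hy, hSapp]
      rw [h2, inner_sub_left, inner_smul_left, Complex.conj_ofReal, h1]
      ring
    have e1 : ‖(t : ℂ) * Complex.I‖ = |t| := by simp
    have hbb : ‖(m t - (lam : ℂ)) * ⟪b, u⟫‖ ≤ 2 * (|t| * (‖(y : H)‖ * ‖w‖)) := by
      rw [hbid, hmsub t]
      have hq1 : ‖⟪(y : H), w⟫‖ ≤ ‖(y : H)‖ * ‖w‖ := norm_inner_le_norm _ _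
      have hq2 : ‖⟪(y : H), u⟫‖ ≤ ‖(y : H)‖ * ‖u‖ := norm_inner_le_norm _ _
      have h4 : ‖(t : ℂ) * Complex.I * (⟪(y : H), w⟫ + (t : ℂ) * Complex.I * ⟪(y : H), u⟫)‖
          ≤ |t| * (‖(y : H)‖ * ‖w‖ + |t| * (‖(y : H)‖ * ‖u‖)) := by
        rw [norm_mul, e1]
        have h5 := norm_add_le ⟪(y : H), w⟫ ((t : ℂ) * Complex.I * ⟪(y : H), u⟫)
        rw [norm_mul, e1] at h5
        have hle2 : ‖⟪(y : H), w⟫ + (t : ℂ) * Complex.I * ⟪(y : H), u⟫‖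
            ≤ ‖(y : H)‖ * ‖w‖ + |t| * (‖(y : H)‖ * ‖u‖) := by
          nlinarith [abs_nonneg t]
        exact mul_le_mul_of_nonneg_left hle2 (abs_nonneg t)
      nlinarith [mul_le_mul_of_nonneg_left htu (mul_nonneg (abs_nonneg t) (norm_nonneg ((y : H)))),
        abs_nonneg t, norm_nonneg ((y : H))]
    -- piece (c) : the small remainder
    have hcc : ‖(m t - (lam : ℂ)) * ⟪r, u⟫‖ ≤ ‖r‖ * ‖w‖ := by
      rw [hmsub t, norm_mul, e1]
      have hq : ‖⟪r, u⟫‖ ≤ ‖r‖ * ‖u‖ := norm_inner_le_norm _ _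
      calc |t| * ‖⟪r, u⟫‖ ≤ |t| * (‖r‖ * ‖u‖) := mul_le_mul_of_nonneg_left hq (abs_nonneg t)
        _ = ‖r‖ * (|t| * ‖u‖) := by ring
        _ ≤ ‖r‖ * ‖w‖ := mul_le_mul_of_nonneg_left htu (norm_nonneg r)
    -- assemble
    have hsplitv : (m t - (lam : ℂ)) * ⟪v, u⟫
        = (m t - (lam : ℂ)) * ⟪P v, u⟫
          + ((m t - (lam : ℂ)) * ⟪b, u⟫ + (m t - (lam : ℂ)) * ⟪r, u⟫) := by
      have hv' : v = P v + (b + r) := by rw [hrdef]; abel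
      calc (m t - (lam : ℂ)) * ⟪v, u⟫
          = (m t - (lam : ℂ)) * ⟪P v + (b + r), u⟫ := by rw [← hv']
        _ = _ := by rw [inner_add_left, inner_add_left]; ring
    rw [hsplitv, ha0, zero_add]
    have htri : ‖(m t - (lam : ℂ)) * ⟪b, u⟫ + (m t - (lam : ℂ)) * ⟪r, u⟫‖
        ≤ 2 * (|t| * (‖(y : H)‖ * ‖w‖)) + ‖r‖ * ‖w‖ :=
      le_trans (norm_add_le _ _) (add_le_add hbb hcc)
    have harith1 : 2 * (|t| * (‖(y : H)‖ * ‖w‖)) < ε / 2 := by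
      have h5 : ‖(y : H)‖ * ‖w‖ + 1 ≤ C1 := by
        rw [hC1]; nlinarith [norm_nonneg ((y : H)), norm_nonneg w]
      have h6 : δ * (4 * C1) = ε := by rw [hδ]; field_simp
      nlinarith [mul_le_mul_of_nonneg_left h5 (abs_nonneg t),
        mul_lt_mul_of_pos_right htδ hC1pos, abs_nonneg t]
    have harith2 : ‖r‖ * ‖w‖ ≤ ε / 2 := by
      have h7 : ε1 * (2 * (‖w‖ + 1)) = ε := by rw [hε1]; field_simp
      nlinarith [mul_le_mul_of_nonneg_right hr.le (norm_nonneg w), norm_nonneg r,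
        norm_nonneg w, hε1pos]
    calc ‖(m t - (lam : ℂ)) * ⟪b, u⟫ + (m t - (lam : ℂ)) * ⟪r, u⟫‖
        ≤ 2 * (|t| * (‖(y : H)‖ * ‖w‖)) + ‖r‖ * ‖w‖ := htri
      _ < ε := by linarith
  -- residue data
  obtain ⟨g, hg, hres⟩ := hRes φ ψ
  set a : ℂ := p (ResM φ) ψ with ha
  set c : ℂ := conj (p (ntr (γ mu ψ)) φ) with hc
  set F : ℝ → ℂ := fun t =>
    (m t - (lam : ℂ)) * ((conj mu - m t) * ⟪v, ((γ (m t) φ : T.domain) : H)⟫) with hF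
  have hev1 : ∀ᶠ t in 𝓝[≠] (0 : ℝ), F t = a + (m t - (lam : ℂ)) * (g (m t) - c) := by
    filter_upwards [hmtend.eventually hpunct, hmtend.eventually hres, self_mem_nhdsWithin]
      with t hzρ hzres ht0
    have hzl : m t - (lam : ℂ) ≠ 0 := sub_ne_zero.mpr (hmne t ht0)
    have h2 := hkey2 (m t) hzρ mu hmu φ ψ
    rw [hF]
    simp only []
    rw [← hv, ← hc] at h2
    rw [h2, hzres]
    field_simp
    ring
  have hev2 : ∀ᶠ t in 𝓝[≠] (0 : ℝ), F t =
      (conj mu - m t) * (((m t - (lam : ℂ)) * ⟪v, x0⟫ + (m t - eta) * (-⟪v, P x0⟫))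
        + (m t - eta) * ((m t - (lam : ℂ)) * ⟪v, R (m t) w⟫)) := by
    filter_upwards [hmtend.eventually hpunct] with t hzρ
    obtain ⟨px, hpx1, hpx2⟩ := hPran x0
    have hQ : ((lam : ℂ) - m t) • R (m t) (P x0) = P x0 := by
      have h1 := (hR (m t) hzρ).1 px
      rw [hpx2, hpx1] at h1
      rw [← sub_smul, map_smul] at h1
      exact h1
    have hγz : ((γ (m t) φ : T.domain) : H) = x0 + (m t - eta) • R (m t) x0 := by
      have h1 := hkey1 (m t) hzρ eta heta φ
      rw [← hx0] at h1
      rw [sub_eq_iff_eq_add'] at h1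
      exact h1
    have hxsplit : R (m t) x0 = R (m t) (P x0) + R (m t) w := by
      rw [← map_add]
      congr 1
      rw [hw]; abel
    have hin : ⟪v, ((γ (m t) φ : T.domain) : H)⟫ =
        ⟪v, x0⟫ + (m t - eta) * (⟪v, R (m t) (P x0)⟫ + ⟪v, R (m t) w⟫) := by
      rw [hγz, hxsplit, inner_add_right, inner_smul_right, inner_add_right]
    have hQ2 : (m t - (lam : ℂ)) * ⟪v, R (m t) (P x0)⟫ = -⟪v, P x0⟫ := by
      have h3 : (m t - (lam : ℂ)) • R (m t) (P x0) = -(P x0) := by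
        rw [← neg_sub ((lam : ℂ)) (m t), neg_smul, hQ]
      calc (m t - (lam : ℂ)) * ⟪v, R (m t) (P x0)⟫
          = ⟪v, (m t - (lam : ℂ)) • R (m t) (P x0)⟫ := (inner_smul_right _ _ _).symm
        _ = ⟪v, -(P x0)⟫ := by rw [h3]
        _ = -⟪v, P x0⟫ := inner_neg_right _ _
    rw [hF]
    simp only []
    rw [hin]
    linear_combination ((conj mu - m t) * (m t - eta)) * hQ2
  -- limits
  haveI : (𝓝[≠] (0 : ℝ)).NeBot := by infer_instance
  have hgc : Filter.Tendsto (fun t => g (m t)) (𝓝[≠] (0 : ℝ)) (𝓝 (g (lam : ℂ))) :=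
    (hg.continuousAt.tendsto).comp hmn
  have TL : Filter.Tendsto (fun t => m t - (lam : ℂ)) (𝓝[≠] (0 : ℝ))
      (𝓝 ((lam : ℂ) - (lam : ℂ))) := hmn.sub tendsto_const_nhds
  have TE : Filter.Tendsto (fun t => m t - eta) (𝓝[≠] (0 : ℝ))
      (𝓝 ((lam : ℂ) - eta)) := hmn.sub tendsto_const_nhds
  have T2 : Filter.Tendsto (fun t => conj mu - m t) (𝓝[≠] (0 : ℝ))
      (𝓝 (conj mu - (lam : ℂ))) := tendsto_const_nhds.sub hmn
  have L1 : Filter.Tendsto F (𝓝[≠] (0 : ℝ))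
      (𝓝 (a + ((lam : ℂ) - (lam : ℂ)) * (g (lam : ℂ) - c))) := by
    refine Filter.Tendsto.congr' (Filter.EventuallyEq.symm hev1) ?_
    exact tendsto_const_nhds.add (TL.mul (hgc.sub tendsto_const_nhds))
  have L2 : Filter.Tendsto F (𝓝[≠] (0 : ℝ))
      (𝓝 ((conj mu - (lam : ℂ)) *
        ((((lam : ℂ) - (lam : ℂ)) * ⟪v, x0⟫ + ((lam : ℂ) - eta) * (-⟪v, P x0⟫))
          + ((lam : ℂ) - eta) * 0))) := by
    refine Filter.Tendsto.congr' (Filter.EventuallyEq.symm hev2) ?_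
    exact T2.mul (((TL.mul_const _).add (TE.mul_const _)).add (TE.mul hwlim))
  have hfinal := tendsto_nhds_unique L1 L2
  linear_combination hfinal
end
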